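/- Let T > 0, γ, M ∈ ℝ, and let B : (0,T)×ℝ² → ℝ, v_S, v_L : (0,T)×ℝ² → ℝ², P : (0,T)×ℝ² → ℝ and Γ_B : (0,T)×ℝ² → ℝ be C² functions with 0 < B < 1 everywhere, satisfying on (0,T)×ℝ²: ∂ₜB + ∇·(B v_S) = Γ_B; ∂ₜv_S + (v_S·∇)v_S + γ∇B/B + ∇P = (M+Γ_B)(v_L−v_S)/B; ∂ₜv_L + (v_L·∇)v_L + ∇P = M(v_S−v_L)/(1−B); and ∇·(B v_S + (1−B) v_L) = 0. Then the average velocity w := B v_S + (1−B) v_L and the relative velocity z := v_S − v_L satisfy ∇·w = 0 and ∂ₜw + (w·∇)w + ∇·(B(1−B) z ⊗ z) + γ∇B + ∇P = 0, where ∇·(B(1−B) z⊗z) denotes the vector with i-th component Σ_{j=1}^{2} ∂_{x_j}(B(1−B) z_i z_j). -/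

import Mathlib

/-- Partial derivative in the time variable `t` of a function on `(t, x₁, x₂)`-space. -/
noncomputable def pdt (f : ℝ × ℝ × ℝ → ℝ) (p : ℝ × ℝ × ℝ) : ℝ :=
  fderiv ℝ f p (1, 0, 0)

/-- Partial derivative in the first spatial variable `x₁`. -/
noncomputable def pdx (f : ℝ × ℝ × ℝ → ℝ) (p : ℝ × ℝ × ℝ) : ℝ :=
  fderiv ℝ f p (0, 1, 0)

/-- Partial derivative in the second spatial variable `x₂`. -/
noncomputable def pdy (f : ℝ × ℝ × ℝ → ℝ) (p : ℝ × ℝ × ℝ) : ℝ :=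
  fderiv ℝ f p (0, 0, 1)

/-- The space-time domain `(0,T) × ℝ²`, viewed as a subset of `ℝ × ℝ × ℝ`. -/
def dom (T : ℝ) : Set (ℝ × ℝ × ℝ) := {p | 0 < p.1 ∧ p.1 < T}


private lemma fd_mul {f g : ℝ × ℝ × ℝ → ℝ} {p : ℝ × ℝ × ℝ}
    (hf : DifferentiableAt ℝ f p) (hg : DifferentiableAt ℝ g p) (v : ℝ × ℝ × ℝ) :
    fderiv ℝ (fun q => f q * g q) p v
      = fderiv ℝ f p v * g p + f p * fderiv ℝ g p v := by
  rw [fderiv_fun_mul hf hg]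
  simp [smul_eq_mul]
  ring

private lemma fd_add {f g : ℝ × ℝ × ℝ → ℝ} {p : ℝ × ℝ × ℝ}
    (hf : DifferentiableAt ℝ f p) (hg : DifferentiableAt ℝ g p) (v : ℝ × ℝ × ℝ) :
    fderiv ℝ (fun q => f q + g q) p v = fderiv ℝ f p v + fderiv ℝ g p v := by
  rw [fderiv_fun_add hf hg]; simp

private lemma fd_sub {f g : ℝ × ℝ × ℝ → ℝ} {p : ℝ × ℝ × ℝ}
    (hf : DifferentiableAt ℝ f p) (hg : DifferentiableAt ℝ g p) (v : ℝ × ℝ × ℝ) :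
    fderiv ℝ (fun q => f q - g q) p v = fderiv ℝ f p v - fderiv ℝ g p v := by
  rw [fderiv_fun_sub hf hg]; simp

private lemma fd_one_sub {f : ℝ × ℝ × ℝ → ℝ} {p : ℝ × ℝ × ℝ}
    (hf : DifferentiableAt ℝ f p) (v : ℝ × ℝ × ℝ) :
    fderiv ℝ (fun q => 1 - f q) p v = -(fderiv ℝ f p v) := by
  rw [fd_sub (differentiableAt_const 1) hf]; simp

/-- If `(B, v_S, v_L, P)` is a `C²` solution of the two-phase system on `(0,T) × ℝ²`
with `0 < B < 1`, then the average velocity `w := B v_S + (1−B) v_L` and the relative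
velocity `z := v_S − v_L` satisfy `∇·w = 0` and
`∂ₜw + (w·∇)w + ∇·(B(1−B) z ⊗ z) + γ∇B + ∇P = 0`. -/
theorem stmt7 (T γ M : ℝ) (hT : 0 < T)
    (B vS1 vS2 vL1 vL2 P ΓB : ℝ × ℝ × ℝ → ℝ)
    (hBreg : ContDiffOn ℝ 2 B (dom T)) (hvS1 : ContDiffOn ℝ 2 vS1 (dom T))
    (hvS2 : ContDiffOn ℝ 2 vS2 (dom T)) (hvL1 : ContDiffOn ℝ 2 vL1 (dom T))
    (hvL2 : ContDiffOn ℝ 2 vL2 (dom T)) (hP : ContDiffOn ℝ 2 P (dom T))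
    (hΓ : ContDiffOn ℝ 2 ΓB (dom T))
    (hB0 : ∀ p ∈ dom T, 0 < B p) (hB1 : ∀ p ∈ dom T, B p < 1)
    (hmass : ∀ p ∈ dom T,
      pdt B p + pdx (fun q => B q * vS1 q) p + pdy (fun q => B q * vS2 q) p = ΓB p)
    (hmomS1 : ∀ p ∈ dom T,
      pdt vS1 p + (vS1 p * pdx vS1 p + vS2 p * pdy vS1 p) + γ * pdx B p / B p + pdx P p =
        (M + ΓB p) * (vL1 p - vS1 p) / B p)
    (hmomS2 : ∀ p ∈ dom T,
      pdt vS2 p + (vS1 p * pdx vS2 p + vS2 p * pdy vS2 p) + γ * pdy B p / B p + pdy P p =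
        (M + ΓB p) * (vL2 p - vS2 p) / B p)
    (hmomL1 : ∀ p ∈ dom T,
      pdt vL1 p + (vL1 p * pdx vL1 p + vL2 p * pdy vL1 p) + pdx P p =
        M * (vS1 p - vL1 p) / (1 - B p))
    (hmomL2 : ∀ p ∈ dom T,
      pdt vL2 p + (vL1 p * pdx vL2 p + vL2 p * pdy vL2 p) + pdy P p =
        M * (vS2 p - vL2 p) / (1 - B p))
    (hdiv : ∀ p ∈ dom T,
      pdx (fun q => B q * vS1 q + (1 - B q) * vL1 q) p +
        pdy (fun q => B q * vS2 q + (1 - B q) * vL2 q) p = 0)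
    (w1 w2 z1 z2 : ℝ × ℝ × ℝ → ℝ)
    (hw1 : w1 = fun q => B q * vS1 q + (1 - B q) * vL1 q)
    (hw2 : w2 = fun q => B q * vS2 q + (1 - B q) * vL2 q)
    (hz1 : z1 = fun q => vS1 q - vL1 q) (hz2 : z2 = fun q => vS2 q - vL2 q) :
    ∀ p ∈ dom T,
      (pdx w1 p + pdy w2 p = 0) ∧
      (pdt w1 p + (w1 p * pdx w1 p + w2 p * pdy w1 p) +
        (pdx (fun q => B q * (1 - B q) * z1 q * z1 q) p +
          pdy (fun q => B q * (1 - B q) * z1 q * z2 q) p) +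
        γ * pdx B p + pdx P p = 0) ∧
      (pdt w2 p + (w1 p * pdx w2 p + w2 p * pdy w2 p) +
        (pdx (fun q => B q * (1 - B q) * z2 q * z1 q) p +
          pdy (fun q => B q * (1 - B q) * z2 q * z2 q) p) +
        γ * pdy B p + pdy P p = 0) := by
  
  intro p hp
  subst hw1 hw2 hz1 hz2
  have hopen : IsOpen (dom T) := by
    have h : dom T = Prod.fst ⁻¹' Set.Ioo 0 T := by
      ext q; simp [dom, Set.mem_Ioo]
    rw [h]; exact isOpen_Ioo.preimage continuous_fst
  have hmem : dom T ∈ nhds p := hopen.mem_nhds hp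
  have one_le : (2 : WithTop ℕ∞) ≠ 0 := by norm_num
  have hB : DifferentiableAt ℝ B p := (hBreg.contDiffAt hmem).differentiableAt one_le
  have hs1 : DifferentiableAt ℝ vS1 p := (hvS1.contDiffAt hmem).differentiableAt one_le
  have hs2 : DifferentiableAt ℝ vS2 p := (hvS2.contDiffAt hmem).differentiableAt one_le
  have hl1 : DifferentiableAt ℝ vL1 p := (hvL1.contDiffAt hmem).differentiableAt one_le
  have hl2 : DifferentiableAt ℝ vL2 p := (hvL2.contDiffAt hmem).differentiableAt one_le
  have hone : DifferentiableAt ℝ (fun q => 1 - B q) p := (differentiableAt_const 1).sub hB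
  have hz1d : DifferentiableAt ℝ (fun q => vS1 q - vL1 q) p := hs1.sub hl1
  have hz2d : DifferentiableAt ℝ (fun q => vS2 q - vL2 q) p := hs2.sub hl2
  have hbb : DifferentiableAt ℝ (fun q => B q * (1 - B q)) p := hB.mul hone
  have hbbz1 : DifferentiableAt ℝ (fun q => B q * (1 - B q) * (vS1 q - vL1 q)) p := hbb.mul hz1d
  have hbbz2 : DifferentiableAt ℝ (fun q => B q * (1 - B q) * (vS2 q - vL2 q)) p := hbb.mul hz2d
  -- expansions
  have e_Bs1 : ∀ v, fderiv ℝ (fun q => B q * vS1 q) p v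
      = fderiv ℝ B p v * vS1 p + B p * fderiv ℝ vS1 p v := fd_mul hB hs1
  have e_Bs2 : ∀ v, fderiv ℝ (fun q => B q * vS2 q) p v
      = fderiv ℝ B p v * vS2 p + B p * fderiv ℝ vS2 p v := fd_mul hB hs2
  have e_w1 : ∀ v, fderiv ℝ (fun q => B q * vS1 q + (1 - B q) * vL1 q) p v
      = (fderiv ℝ B p v * vS1 p + B p * fderiv ℝ vS1 p v)
        + (-(fderiv ℝ B p v) * vL1 p + (1 - B p) * fderiv ℝ vL1 p v) := by
    intro v
    rw [fd_add (f := fun q => B q * vS1 q) (g := fun q => (1 - B q) * vL1 q) (hB.mul hs1) (hone.mul hl1), fd_mul hB hs1, fd_mul hone hl1, fd_one_sub hB]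
  have e_w2 : ∀ v, fderiv ℝ (fun q => B q * vS2 q + (1 - B q) * vL2 q) p v
      = (fderiv ℝ B p v * vS2 p + B p * fderiv ℝ vS2 p v)
        + (-(fderiv ℝ B p v) * vL2 p + (1 - B p) * fderiv ℝ vL2 p v) := by
    intro v
    rw [fd_add (f := fun q => B q * vS2 q) (g := fun q => (1 - B q) * vL2 q) (hB.mul hs2) (hone.mul hl2), fd_mul hB hs2, fd_mul hone hl2, fd_one_sub hB]
  have e_bb : ∀ v, fderiv ℝ (fun q => B q * (1 - B q)) p v
      = fderiv ℝ B p v * (1 - B p) + B p * (-(fderiv ℝ B p v)) := by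
    intro v
    rw [fd_mul hB hone, fd_one_sub hB]
  have e_bbz1 : ∀ v, fderiv ℝ (fun q => B q * (1 - B q) * (vS1 q - vL1 q)) p v
      = (fderiv ℝ B p v * (1 - B p) + B p * (-(fderiv ℝ B p v))) * (vS1 p - vL1 p)
        + B p * (1 - B p) * (fderiv ℝ vS1 p v - fderiv ℝ vL1 p v) := by
    intro v
    rw [fd_mul hbb hz1d, e_bb, fd_sub hs1 hl1]
  have e_bbz2 : ∀ v, fderiv ℝ (fun q => B q * (1 - B q) * (vS2 q - vL2 q)) p v
      = (fderiv ℝ B p v * (1 - B p) + B p * (-(fderiv ℝ B p v))) * (vS2 p - vL2 p)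
        + B p * (1 - B p) * (fderiv ℝ vS2 p v - fderiv ℝ vL2 p v) := by
    intro v
    rw [fd_mul hbb hz2d, e_bb, fd_sub hs2 hl2]
  have e_q11 : ∀ v, fderiv ℝ (fun q => B q * (1 - B q) * (vS1 q - vL1 q) * (vS1 q - vL1 q)) p v
      = ((fderiv ℝ B p v * (1 - B p) + B p * (-(fderiv ℝ B p v))) * (vS1 p - vL1 p)
          + B p * (1 - B p) * (fderiv ℝ vS1 p v - fderiv ℝ vL1 p v)) * (vS1 p - vL1 p)
        + B p * (1 - B p) * (vS1 p - vL1 p) * (fderiv ℝ vS1 p v - fderiv ℝ vL1 p v) := by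
    intro v
    rw [fd_mul hbbz1 hz1d, e_bbz1, fd_sub hs1 hl1]
  have e_q12 : ∀ v, fderiv ℝ (fun q => B q * (1 - B q) * (vS1 q - vL1 q) * (vS2 q - vL2 q)) p v
      = ((fderiv ℝ B p v * (1 - B p) + B p * (-(fderiv ℝ B p v))) * (vS1 p - vL1 p)
          + B p * (1 - B p) * (fderiv ℝ vS1 p v - fderiv ℝ vL1 p v)) * (vS2 p - vL2 p)
        + B p * (1 - B p) * (vS1 p - vL1 p) * (fderiv ℝ vS2 p v - fderiv ℝ vL2 p v) := by
    intro v
    rw [fd_mul hbbz1 hz2d, e_bbz1, fd_sub hs2 hl2]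
  have e_q21 : ∀ v, fderiv ℝ (fun q => B q * (1 - B q) * (vS2 q - vL2 q) * (vS1 q - vL1 q)) p v
      = ((fderiv ℝ B p v * (1 - B p) + B p * (-(fderiv ℝ B p v))) * (vS2 p - vL2 p)
          + B p * (1 - B p) * (fderiv ℝ vS2 p v - fderiv ℝ vL2 p v)) * (vS1 p - vL1 p)
        + B p * (1 - B p) * (vS2 p - vL2 p) * (fderiv ℝ vS1 p v - fderiv ℝ vL1 p v) := by
    intro v
    rw [fd_mul hbbz2 hz1d, e_bbz2, fd_sub hs1 hl1]
  have e_q22 : ∀ v, fderiv ℝ (fun q => B q * (1 - B q) * (vS2 q - vL2 q) * (vS2 q - vL2 q)) p v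
      = ((fderiv ℝ B p v * (1 - B p) + B p * (-(fderiv ℝ B p v))) * (vS2 p - vL2 p)
          + B p * (1 - B p) * (fderiv ℝ vS2 p v - fderiv ℝ vL2 p v)) * (vS2 p - vL2 p)
        + B p * (1 - B p) * (vS2 p - vL2 p) * (fderiv ℝ vS2 p v - fderiv ℝ vL2 p v) := by
    intro v
    rw [fd_mul hbbz2 hz2d, e_bbz2, fd_sub hs2 hl2]
  -- hypotheses at p, denominators cleared
  have hb0 : B p ≠ 0 := ne_of_gt (hB0 p hp)
  have hb1 : (1 : ℝ) - B p ≠ 0 := sub_ne_zero.mpr (ne_of_gt (hB1 p hp))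
  have hS1' : B p * pdt vS1 p + B p * (vS1 p * pdx vS1 p + vS2 p * pdy vS1 p)
      + γ * pdx B p + B p * pdx P p = (M + ΓB p) * (vL1 p - vS1 p) := by
    have h := hmomS1 p hp
    field_simp [hb0] at h
    linear_combination h
  have hS2' : B p * pdt vS2 p + B p * (vS1 p * pdx vS2 p + vS2 p * pdy vS2 p)
      + γ * pdy B p + B p * pdy P p = (M + ΓB p) * (vL2 p - vS2 p) := by
    have h := hmomS2 p hp
    field_simp [hb0] at h
    linear_combination h
  have hL1' : (1 - B p) * pdt vL1 p + (1 - B p) * (vL1 p * pdx vL1 p + vL2 p * pdy vL1 p)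
      + (1 - B p) * pdx P p = M * (vS1 p - vL1 p) := by
    have h := hmomL1 p hp
    field_simp [hb1] at h
    linear_combination h
  have hL2' : (1 - B p) * pdt vL2 p + (1 - B p) * (vL1 p * pdx vL2 p + vL2 p * pdy vL2 p)
      + (1 - B p) * pdy P p = M * (vS2 p - vL2 p) := by
    have h := hmomL2 p hp
    field_simp [hb1] at h
    linear_combination h
  have hm := hmass p hp
  have hd := hdiv p hp
  simp only [pdt, pdx, pdy] at hS1' hS2' hL1' hL2' hm hd ⊢
  simp only [e_Bs1, e_Bs2] at hm
  simp only [e_w1, e_w2] at hd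
  refine ⟨?_, ?_, ?_⟩
  · simp only [e_w1, e_w2]
    linear_combination hd
  · simp only [e_w1, e_q11, e_q12]
    linear_combination hS1' + hL1' + (vS1 p - vL1 p) * hm - B p * (vS1 p - vL1 p) * hd
  · simp only [e_w2, e_q21, e_q22]
    linear_combination hS2' + hL2' + (vS2 p - vL2 p) * hm - B p * (vS2 p - vL2 p) * hd
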